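/- arXiv:2110.14111 — 7 statements merged into one kernel-verified Lean document; each statement's English description precedes it below -/
import Mathlib

section
/- If S is an invertible m×m matrix and T is an invertible n×n matrix over F (= ℝ or ℂ), x ∈ 𝒞(S), and y ∈ 𝒞(T), then x ⊗ y ∈ 𝒞(S ⊗ T). That is, 𝒞(S) ⊗ 𝒞(T) ⊆ 𝒞(S ⊗ T). -/
/-- The Kronecker product of vectors. -/
def vecKron {F : Type*} [Mul F] {m n : ℕ} (x : Fin m → F) (y : Fin n → F) :
    Fin (m * n) → F :=
  fun i => x i.divNat * y i.modNat

/-- The Kronecker product of matrices. -/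
def matKron {F : Type*} [Mul F] {m n p q : ℕ}
    (S : Matrix (Fin m) (Fin n) F) (T : Matrix (Fin p) (Fin q) F) :
    Matrix (Fin (m * p)) (Fin (n * q)) F :=
  fun i j => S i.divNat j.divNat * T i.modNat j.modNat

/-- An entry of a matrix over `F = ℝ` or `ℂ` is nonnegative:
it is a nonnegative real number. -/
def entryNonneg {F : Type*} [RCLike F] (z : F) : Prop :=
  ∃ r : ℝ, 0 ≤ r ∧ z = (r : F)

/-- The Perron spectracone `𝒞(S) = {x : S D_x S⁻¹ ≥ 0 entrywise}`. -/
def spectracone {F : Type*} [RCLike F] {n : ℕ} (S : Matrix (Fin n) (Fin n) F) :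
    Set (Fin n → F) :=
  {x | ∀ i j, entryNonneg ((S * Matrix.diagonal x * S⁻¹) i j)}

/-- `𝒞(S) ⊗ 𝒞(T) ⊆ 𝒞(S ⊗ T)`. -/
theorem vecKron_mem_spectracone_matKron {F : Type*} [RCLike F] {m n : ℕ}
    (S : Matrix (Fin m) (Fin m) F) (T : Matrix (Fin n) (Fin n) F)
    (hS : IsUnit S.det) (hT : IsUnit T.det)
    (x : Fin m → F) (y : Fin n → F)
    (hx : x ∈ spectracone S) (hy : y ∈ spectracone T) :
    vecKron x y ∈ spectracone (matKron S T) := by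
  have h1 : matKron S T = Matrix.reindex finProdFinEquiv finProdFinEquiv
      (Matrix.kroneckerMap (· * ·) S T) := by
    ext i j; rfl
  have h2 : Matrix.diagonal (vecKron x y) = Matrix.reindex finProdFinEquiv finProdFinEquiv
      (Matrix.kroneckerMap (· * ·) (Matrix.diagonal x) (Matrix.diagonal y)) := by
    rw [Matrix.diagonal_kronecker_diagonal, Matrix.reindex_apply,
      Matrix.submatrix_diagonal_equiv]
    rfl
  have key : matKron S T * Matrix.diagonal (vecKron x y) * (matKron S T)⁻¹
      = Matrix.reindex finProdFinEquiv finProdFinEquiv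
          (Matrix.kroneckerMap (· * ·) (S * Matrix.diagonal x * S⁻¹)
            (T * Matrix.diagonal y * T⁻¹)) := by
    rw [h1, h2, Matrix.inv_reindex, Matrix.reindex_apply, Matrix.reindex_apply,
      Matrix.reindex_apply, Matrix.submatrix_mul_equiv, Matrix.submatrix_mul_equiv,
      Matrix.inv_kronecker, Matrix.mul_kronecker_mul, Matrix.mul_kronecker_mul]
    rfl
  intro i j
  rw [key]
  obtain ⟨r, hr, hrx⟩ := hx i.divNat j.divNat
  obtain ⟨s, hs, hsy⟩ := hy i.modNat j.modNat
  refine ⟨r * s, mul_nonneg hr hs, ?_⟩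
  simp only [Matrix.reindex_apply, Matrix.submatrix_apply, Matrix.kroneckerMap_apply]
  have : (finProdFinEquiv.symm i) = (i.divNat, i.modNat) := rfl
  have : (finProdFinEquiv.symm j) = (j.divNat, j.modNat) := rfl
  show (S * Matrix.diagonal x * S⁻¹) i.divNat j.divNat *
      (T * Matrix.diagonal y * T⁻¹) i.modNat j.modNat = _
  rw [hrx, hsy]
  push_cast
  ring
end

section
/- If S is an invertible m×m matrix and T is an invertible n×n matrix over F, x ∈ 𝒫(S), and y ∈ 𝒫(T), then x ⊗ y ∈ 𝒫(S ⊗ T). -/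
/-- The Perron spectratope `𝒫(S) = {x ∈ 𝒞(S) : ‖x‖_∞ = 1}`. -/
def spectratope {F : Type*} [RCLike F] {n : ℕ} (S : Matrix (Fin n) (Fin n) F) :
    Set (Fin n → F) :=
  {x | x ∈ spectracone S ∧ (Finset.univ.sup fun i => ‖x i‖₊) = 1}

open Matrix Kronecker in
/-- `𝒫(S) ⊗ 𝒫(T) ⊆ 𝒫(S ⊗ T)`. -/
theorem vecKron_mem_spectratope_matKron {F : Type*} [RCLike F] {m n : ℕ}
    (S : Matrix (Fin m) (Fin m) F) (T : Matrix (Fin n) (Fin n) F)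
    (hS : IsUnit S.det) (hT : IsUnit T.det)
    (x : Fin m → F) (y : Fin n → F)
    (hx : x ∈ spectratope S) (hy : y ∈ spectratope T) :
    vecKron x y ∈ spectratope (matKron S T) := by
  obtain ⟨hxc, hxn⟩ := hx
  obtain ⟨hyc, hyn⟩ := hy
  set e : Fin m × Fin n ≃ Fin (m * n) := finProdFinEquiv
  have hmat : matKron S T = Matrix.reindex e e (S ⊗ₖ T) := rfl
  have hdiag : Matrix.diagonal (vecKron x y)
      = Matrix.reindex e e (Matrix.diagonal x ⊗ₖ Matrix.diagonal y) := by
    rw [Matrix.diagonal_kronecker_diagonal]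
    ext i j
    simp only [Matrix.reindex_apply, Matrix.submatrix_diagonal_equiv]
    rfl
  have key : matKron S T * Matrix.diagonal (vecKron x y) * (matKron S T)⁻¹
      = Matrix.reindex e e
        ((S * Matrix.diagonal x * S⁻¹) ⊗ₖ (T * Matrix.diagonal y * T⁻¹)) := by
    rw [hmat, hdiag, Matrix.inv_reindex, Matrix.inv_kronecker]
    simp only [Matrix.reindex_apply, Matrix.submatrix_mul_equiv,
      Matrix.mul_kronecker_mul]
  constructor
  · intro i j
    rw [key]
    obtain ⟨r₁, hr₁, hr₁e⟩ := hxc (e.symm i).1 (e.symm j).1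
    obtain ⟨r₂, hr₂, hr₂e⟩ := hyc (e.symm i).2 (e.symm j).2
    refine ⟨r₁ * r₂, mul_nonneg hr₁ hr₂, ?_⟩
    simp only [Matrix.reindex_apply, Matrix.submatrix_apply,
      Matrix.kroneckerMap_apply, hr₁e, hr₂e]
    push_cast
    ring
  · apply le_antisymm
    · apply Finset.sup_le
      intro i _
      have h1 : ‖x i.divNat‖₊ ≤ 1 := hxn ▸ Finset.le_sup (f := fun i => ‖x i‖₊) (Finset.mem_univ _)
      have h2 : ‖y i.modNat‖₊ ≤ 1 := hyn ▸ Finset.le_sup (f := fun j => ‖y j‖₊) (Finset.mem_univ _)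
      calc ‖vecKron x y i‖₊ = ‖x i.divNat‖₊ * ‖y i.modNat‖₊ := nnnorm_mul _ _
        _ ≤ 1 := mul_le_one' h1 h2
    · rcases (Finset.univ : Finset (Fin m)).eq_empty_or_nonempty with h | h
      · rw [h, Finset.sup_empty] at hxn; exact absurd hxn (by simp)
      rcases (Finset.univ : Finset (Fin n)).eq_empty_or_nonempty with h' | h'
      · rw [h', Finset.sup_empty] at hyn; exact absurd hyn (by simp)
      obtain ⟨i₀, -, hi₀⟩ := Finset.exists_mem_eq_sup _ h (fun i => ‖x i‖₊)
      obtain ⟨j₀, -, hj₀⟩ := Finset.exists_mem_eq_sup _ h' (fun j => ‖y j‖₊)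
      have hk : ‖vecKron x y (e (i₀, j₀))‖₊ = 1 := by
        have hdiv : (e (i₀, j₀)).divNat = i₀ := congrArg Prod.fst (e.symm_apply_apply (i₀, j₀))
        have hmod : (e (i₀, j₀)).modNat = j₀ := congrArg Prod.snd (e.symm_apply_apply (i₀, j₀))
        rw [vecKron, hdiv, hmod, nnnorm_mul, ← hi₀, ← hj₀, hxn, hyn, mul_one]
      exact hk ▸ Finset.le_sup (f := fun i => ‖vecKron x y i‖₊) (Finset.mem_univ _)
end

section
/- If S ∈ GL_m(F) and T ∈ GL_n(F) are Perron similarities, then S ⊗ T is a Perron similarity. Specifically, if Se_k ≥ 0 and e_k^T S^{-1} ≥ 0 (for some k), and Te_ℓ ≥ 0 and e_ℓ^T T^{-1} ≥ 0 (for some ℓ), then column (k-1)n+ℓ of S ⊗ T and row (k-1)n+ℓ of (S ⊗ T)^{-1} are both nonnegative. -/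
/-- If `S` and `T` are Perron similarities witnessed by nonnegative column `k` of `S`,
row `k` of `S⁻¹`, column `ℓ` of `T`, and row `ℓ` of `T⁻¹`, then column `(k-1)n+ℓ` of
`S ⊗ T` and row `(k-1)n+ℓ` of `(S ⊗ T)⁻¹` are both nonnegative; in particular
`S ⊗ T` is a Perron similarity. -/
theorem matKron_isPerronSimilarity {F : Type*} [RCLike F] {m n : ℕ}
    (S : Matrix (Fin m) (Fin m) F) (T : Matrix (Fin n) (Fin n) F)
    (hS : IsUnit S.det) (hT : IsUnit T.det)
    (k : Fin m) (ℓ : Fin n)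
    (hScol : ∀ i, entryNonneg (S i k)) (hSrow : ∀ j, entryNonneg (S⁻¹ k j))
    (hTcol : ∀ i, entryNonneg (T i ℓ)) (hTrow : ∀ j, entryNonneg (T⁻¹ ℓ j)) :
    IsUnit (matKron S T).det ∧
      (∀ i, entryNonneg (matKron S T i
        (⟨k.val * n + ℓ.val, by
          calc k.val * n + ℓ.val < k.val * n + n := by omega
          _ = (k.val + 1) * n := by ring
          _ ≤ m * n := Nat.mul_le_mul_right n k.isLt⟩ : Fin (m * n)))) ∧
      (∀ j, entryNonneg ((matKron S T)⁻¹
        (⟨k.val * n + ℓ.val, by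
          calc k.val * n + ℓ.val < k.val * n + n := by omega
          _ = (k.val + 1) * n := by ring
          _ ≤ m * n := Nat.mul_le_mul_right n k.isLt⟩ : Fin (m * n)) j)) := by
  have hmul : ∀ {z w : F}, entryNonneg z → entryNonneg w → entryNonneg (z * w) := by
    rintro z w ⟨r, hr, rfl⟩ ⟨s, hs, rfl⟩
    exact ⟨r * s, mul_nonneg hr hs, by push_cast; ring⟩
  set idx : Fin (m * n) := ⟨k.val * n + ℓ.val, by
      calc k.val * n + ℓ.val < k.val * n + n := by omega
      _ = (k.val + 1) * n := by ring
      _ ≤ m * n := Nat.mul_le_mul_right n k.isLt⟩ with hidxdef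
  have hidx : finProdFinEquiv.symm idx = (k, ℓ) := by
    rw [Equiv.symm_apply_eq]
    apply Fin.ext
    simp [finProdFinEquiv, hidxdef]
    ring
  have hdiv : idx.divNat = k := by
    have := congrArg Prod.fst hidx
    simpa [finProdFinEquiv] using this
  have hmod : idx.modNat = ℓ := by
    have := congrArg Prod.snd hidx
    simpa [finProdFinEquiv] using this
  have hK : ∀ (A : Matrix (Fin m) (Fin m) F) (B : Matrix (Fin n) (Fin n) F),
      matKron A B = (Matrix.kroneckerMap (· * ·) A B).submatrix
        finProdFinEquiv.symm finProdFinEquiv.symm := by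
    intro A B
    ext i j
    rfl
  refine ⟨?_, ?_, ?_⟩
  · rw [hK, Matrix.det_submatrix_equiv_self, Matrix.det_kronecker]
    exact (hS.pow _).mul (hT.pow _)
  · intro i
    show entryNonneg (S i.divNat idx.divNat * T i.modNat idx.modNat)
    rw [hdiv, hmod]
    exact hmul (hScol _) (hTcol _)
  · intro j
    rw [hK, Matrix.inv_submatrix_equiv, Matrix.inv_kronecker]
    show entryNonneg (S⁻¹ idx.divNat j.divNat * T⁻¹ idx.modNat j.modNat)
    rw [hdiv, hmod]
    exact hmul (hSrow _) (hTrow _)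
end

section
/- If S ∈ GL_m(F) and T ∈ GL_n(F) are Perron similarities with m > 1 and n > 1, then the containment 𝒞(S) ⊗ 𝒞(T) ⊆ 𝒞(S ⊗ T) is strict: there exists z ∈ 𝒞(S ⊗ T) that is not of the form x ⊗ y with x ∈ 𝒞(S) and y ∈ 𝒞(T). -/
/-- An invertible matrix is a Perron similarity if one of its columns and the
corresponding row of its inverse are both nonnegative or both nonpositive. -/
def IsPerronSimilarity {F : Type*} [RCLike F] {n : ℕ}
    (S : Matrix (Fin n) (Fin n) F) : Prop :=
  IsUnit S.det ∧ ∃ i,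
    ((∀ r, entryNonneg (S r i)) ∧ (∀ c, entryNonneg (S⁻¹ i c))) ∨
    ((∀ r, entryNonneg (-(S r i))) ∧ (∀ c, entryNonneg (-(S⁻¹ i c))))

section Aux

variable {F : Type*} [RCLike F]

lemma entryNonneg_mul {a b : F} (ha : entryNonneg a) (hb : entryNonneg b) :
    entryNonneg (a * b) := by
  obtain ⟨r, hr, rfl⟩ := ha
  obtain ⟨s, hs, rfl⟩ := hb
  exact ⟨r * s, mul_nonneg hr hs, by push_cast; ring⟩

lemma entryNonneg_add {a b : F} (ha : entryNonneg a) (hb : entryNonneg b) :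
    entryNonneg (a + b) := by
  obtain ⟨r, hr, rfl⟩ := ha
  obtain ⟨s, hs, rfl⟩ := hb
  exact ⟨r + s, add_nonneg hr hs, by push_cast; ring⟩

lemma entryNonneg_zero : entryNonneg (0 : F) := ⟨0, le_refl _, by norm_num⟩

lemma entryNonneg_one : entryNonneg (1 : F) := ⟨1, zero_le_one, by norm_num⟩

/-- From a Perron similarity, extract an index whose column-row products are nonneg. -/
lemma perron_prod {n : ℕ} {S : Matrix (Fin n) (Fin n) F} (hS : IsPerronSimilarity S) :
    ∃ i, ∀ r c, entryNonneg (S r i * S⁻¹ i c) := by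
  obtain ⟨-, i, h | h⟩ := hS
  · exact ⟨i, fun r c => entryNonneg_mul (h.1 r) (h.2 c)⟩
  · refine ⟨i, fun r c => ?_⟩
    have : S r i * S⁻¹ i c = (-(S r i)) * (-(S⁻¹ i c)) := by ring
    rw [this]
    exact entryNonneg_mul (h.1 r) (h.2 c)

lemma divNat_fpf {m n : ℕ} (a : Fin m) (b : Fin n) :
    (finProdFinEquiv (a, b)).divNat = a := by
  have := finProdFinEquiv.symm_apply_apply (a, b)
  rw [finProdFinEquiv_symm_apply] at this
  exact congrArg Prod.fst this

lemma modNat_fpf {m n : ℕ} (a : Fin m) (b : Fin n) :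
    (finProdFinEquiv (a, b)).modNat = b := by
  have := finProdFinEquiv.symm_apply_apply (a, b)
  rw [finProdFinEquiv_symm_apply] at this
  exact congrArg Prod.snd this

lemma divNat_modNat_inj {m n : ℕ} {i j : Fin (m * n)}
    (h1 : i.divNat = j.divNat) (h2 : i.modNat = j.modNat) : i = j := by
  have : finProdFinEquiv.symm i = finProdFinEquiv.symm j := by
    rw [finProdFinEquiv_symm_apply, finProdFinEquiv_symm_apply, h1, h2]
  exact finProdFinEquiv.symm.injective this

lemma matKron_mul {m n : ℕ} (A C : Matrix (Fin m) (Fin m) F)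
    (B D : Matrix (Fin n) (Fin n) F) :
    matKron A B * matKron C D = matKron (A * C) (B * D) := by
  ext i j
  show ∑ k, matKron A B i k * matKron C D k j = _
  rw [← finProdFinEquiv.sum_comp (fun k => matKron A B i k * matKron C D k j)]
  rw [Fintype.sum_prod_type]
  simp only [matKron, divNat_fpf, modNat_fpf]
  rw [Matrix.mul_apply, Matrix.mul_apply, Finset.sum_mul_sum]
  refine Finset.sum_congr rfl fun a _ => Finset.sum_congr rfl fun b _ => by ring

lemma matKron_one {m n : ℕ} :
    matKron (1 : Matrix (Fin m) (Fin m) F) (1 : Matrix (Fin n) (Fin n) F) = 1 := by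
  ext i j
  unfold matKron
  by_cases h : i = j
  · subst h; simp [Matrix.one_apply]
  · rw [Matrix.one_apply_ne h]
    rcases eq_or_ne i.divNat j.divNat with h1 | h1
    · rcases eq_or_ne i.modNat j.modNat with h2 | h2
      · exact absurd (divNat_modNat_inj h1 h2) h
      · rw [Matrix.one_apply_ne h2, mul_zero]
    · rw [Matrix.one_apply_ne h1, zero_mul]

end Aux

/-- If `S` and `T` are Perron similarities with `m, n > 1`, then the containment
`𝒞(S) ⊗ 𝒞(T) ⊆ 𝒞(S ⊗ T)` is strict. -/
theorem spectracone_kron_ssubset {F : Type*} [RCLike F] {m n : ℕ}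
    (hm : 1 < m) (hn : 1 < n)
    (S : Matrix (Fin m) (Fin m) F) (T : Matrix (Fin n) (Fin n) F)
    (hS : IsPerronSimilarity S) (hT : IsPerronSimilarity T) :
    ∃ z ∈ spectracone (matKron S T),
      ¬∃ x ∈ spectracone S, ∃ y ∈ spectracone T, z = vecKron x y := by
  obtain ⟨i0, hSprod⟩ := perron_prod hS
  obtain ⟨j0, hTprod⟩ := perron_prod hT
  set k0 : Fin (m * n) := finProdFinEquiv (i0, j0) with hk0
  set z : Fin (m * n) → F := fun k => if k = k0 then 2 else 1 with hzdef
  -- inverse of the Kronecker product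
  have hSinv : S * S⁻¹ = 1 := Matrix.mul_nonsing_inv S hS.1
  have hTinv : T * T⁻¹ = 1 := Matrix.mul_nonsing_inv T hT.1
  have hMN : matKron S T * matKron S⁻¹ T⁻¹ = 1 := by
    rw [matKron_mul, hSinv, hTinv, matKron_one]
  have hinv : (matKron S T)⁻¹ = matKron S⁻¹ T⁻¹ := Matrix.inv_eq_right_inv hMN
  refine ⟨z, ?_, ?_⟩
  · intro r c
    rw [hinv]
    have key : (matKron S T * Matrix.diagonal z * matKron S⁻¹ T⁻¹) r c =
        (matKron S T * matKron S⁻¹ T⁻¹) r c +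
          matKron S T r k0 * matKron S⁻¹ T⁻¹ k0 c := by
      rw [Matrix.mul_apply, Matrix.mul_apply]
      have : ∀ k, (matKron S T * Matrix.diagonal z) r k * matKron S⁻¹ T⁻¹ k c =
          matKron S T r k * matKron S⁻¹ T⁻¹ k c +
            if k = k0 then matKron S T r k * matKron S⁻¹ T⁻¹ k c else 0 := by
        intro k
        rw [Matrix.mul_diagonal, hzdef]
        by_cases h : k = k0 <;> (simp [h]; try ring)
      rw [Finset.sum_congr rfl fun k _ => this k, Finset.sum_add_distrib,
        Finset.sum_ite_eq' Finset.univ k0]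
      simp
    rw [key, hMN]
    have hprod : matKron S T r k0 * matKron S⁻¹ T⁻¹ k0 c =
        (S r.divNat i0 * S⁻¹ i0 c.divNat) * (T r.modNat j0 * T⁻¹ j0 c.modNat) := by
      unfold matKron
      rw [hk0, divNat_fpf, modNat_fpf]
      ring
    rw [hprod]
    refine entryNonneg_add ?_ (entryNonneg_mul (hSprod _ _) (hTprod _ _))
    by_cases h : r = c
    · rw [h, Matrix.one_apply_eq]; exact entryNonneg_one
    · rw [Matrix.one_apply_ne h]; exact entryNonneg_zero
  · rintro ⟨x, -, y, -, hz⟩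
    -- pick indices distinct from i0, j0
    haveI : Nontrivial (Fin m) := Fin.nontrivial_iff_two_le.mpr hm
    haveI : Nontrivial (Fin n) := Fin.nontrivial_iff_two_le.mpr hn
    obtain ⟨i1, hi1⟩ := exists_ne i0
    obtain ⟨j1, hj1⟩ := exists_ne j0
    have hval : ∀ (a : Fin m) (b : Fin n),
        x a * y b = if a = i0 ∧ b = j0 then 2 else 1 := by
      intro a b
      have heq := congrFun hz (finProdFinEquiv (a, b))
      simp only [hzdef, vecKron, divNat_fpf, modNat_fpf] at heq
      rw [← heq]
      by_cases hab : a = i0 ∧ b = j0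
      · rw [hab.1, hab.2, ← hk0]
        simp
      · have hne : finProdFinEquiv (a, b) ≠ k0 := by
          intro he
          have h2 : (a, b) = (i0, j0) := finProdFinEquiv.injective (by rw [he, hk0])
          exact hab ⟨congrArg Prod.fst h2, congrArg Prod.snd h2⟩
        rw [if_neg hne, if_neg hab]
    have h1 : x i0 * y j0 = 2 := by rw [hval]; simp
    have h2 : x i0 * y j1 = 1 := by rw [hval]; simp [hj1]
    have h3 : x i1 * y j0 = 1 := by rw [hval]; simp [hi1]
    have h4 : x i1 * y j1 = 1 := by rw [hval]; simp [hi1]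
    have : (2 : F) * 1 = 1 * 1 := by
      calc (2 : F) * 1 = (x i0 * y j0) * (x i1 * y j1) := by rw [h1, h4]
        _ = (x i0 * y j1) * (x i1 * y j0) := by ring
        _ = 1 * 1 := by rw [h2, h3]
    norm_num at this
end

section
/- If S ∈ GL_m(F) and T ∈ GL_n(F) are ideal Perron similarities, then S ⊗ T is ideal: there is an index r ∈ ⟨mn⟩ with e_r^T(S⊗T) = e^T, and every row of S ⊗ T belongs to 𝒞(S ⊗ T). -/
/-- A matrix is ideal if some row is the all-ones row and every row belongs to
its spectracone (the row characterization of ideal Perron similarities). -/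
def IsIdeal {F : Type*} [RCLike F] {n : ℕ} (S : Matrix (Fin n) (Fin n) F) : Prop :=
  (∃ k, ∀ j, S k j = 1) ∧ ∀ i, S i ∈ spectracone S

open Matrix Kronecker in
lemma matKron_eq_reindex {F : Type*} [Mul F] {m n : ℕ}
    (S : Matrix (Fin m) (Fin m) F) (T : Matrix (Fin n) (Fin n) F) :
    matKron S T = Matrix.reindex finProdFinEquiv finProdFinEquiv (S ⊗ₖ T) := by
  ext i j
  simp [matKron, Matrix.reindex_apply, Matrix.submatrix_apply, Matrix.kroneckerMap_apply]

open Matrix Kronecker in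
lemma diagonal_vecKron_eq_reindex {F : Type*} [RCLike F] {m n : ℕ}
    (x : Fin m → F) (y : Fin n → F) :
    Matrix.diagonal (vecKron x y) =
      Matrix.reindex finProdFinEquiv finProdFinEquiv
        (Matrix.diagonal (fun p : Fin m × Fin n => x p.1 * y p.2)) := by
  ext i j
  simp only [Matrix.reindex_apply, Matrix.submatrix_apply, Matrix.diagonal_apply]
  by_cases h : i = j
  · simp [h, vecKron, finProdFinEquiv_symm_apply]
  · rw [if_neg h, if_neg]
    exact fun hc => h (finProdFinEquiv.symm.injective hc)

open Matrix Kronecker in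
lemma key {F : Type*} [RCLike F] {m n : ℕ}
    (S : Matrix (Fin m) (Fin m) F) (T : Matrix (Fin n) (Fin n) F)
    (x : Fin m → F) (y : Fin n → F) :
    matKron S T * Matrix.diagonal (vecKron x y) * (matKron S T)⁻¹ =
      matKron (S * Matrix.diagonal x * S⁻¹) (T * Matrix.diagonal y * T⁻¹) := by
  rw [matKron_eq_reindex S T, diagonal_vecKron_eq_reindex,
    matKron_eq_reindex, Matrix.inv_reindex]
  simp only [Matrix.reindex_apply, Matrix.submatrix_mul_equiv]
  congr 1
  rw [Matrix.inv_kronecker, ← Matrix.diagonal_kronecker_diagonal,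
    ← Matrix.mul_kronecker_mul, ← Matrix.mul_kronecker_mul]

lemma entryNonneg.mul {F : Type*} [RCLike F] {a b : F}
    (ha : entryNonneg a) (hb : entryNonneg b) : entryNonneg (a * b) := by
  obtain ⟨r, hr, rfl⟩ := ha
  obtain ⟨s, hs, rfl⟩ := hb
  exact ⟨r * s, mul_nonneg hr hs, by push_cast; ring⟩

/-- If `S` and `T` are ideal, then `S ⊗ T` is ideal: some row of `S ⊗ T` is the
all-ones row and every row of `S ⊗ T` belongs to `𝒞(S ⊗ T)`. -/
theorem matKron_isIdeal {F : Type*} [RCLike F] {m n : ℕ}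
    (S : Matrix (Fin m) (Fin m) F) (T : Matrix (Fin n) (Fin n) F)
    (hS : IsUnit S.det) (hT : IsUnit T.det)
    (hSi : IsIdeal S) (hTi : IsIdeal T) :
    IsIdeal (matKron S T) := by
  obtain ⟨⟨k, hk⟩, hSrows⟩ := hSi
  obtain ⟨⟨l, hl⟩, hTrows⟩ := hTi
  constructor
  · refine ⟨finProdFinEquiv (k, l), fun j => ?_⟩
    have : (finProdFinEquiv (k, l) : Fin (m * n)).divNat = k ∧
        (finProdFinEquiv (k, l) : Fin (m * n)).modNat = l := by
      have := finProdFinEquiv.symm_apply_apply (k, l)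
      rw [finProdFinEquiv_symm_apply] at this
      exact ⟨congrArg Prod.fst this, congrArg Prod.snd this⟩
    simp [matKron, this.1, this.2, hk, hl]
  · intro i p q
    have hrow : (matKron S T) i = vecKron (S i.divNat) (T i.modNat) := rfl
    rw [hrow, key]
    exact entryNonneg.mul (hSrows i.divNat p.divNat q.divNat)
      (hTrows i.modNat p.modNat q.modNat)
end

section
/- Let x ∈ ℝ^m and y ∈ ℝ^n be totally nonzero vectors, neither a scalar multiple of the all-ones vector, so there exist indices i ≠ j and k ≠ ℓ with x_i ≠ x_j and y_k ≠ y_ℓ. Then for any ε > 0, the vector z' = x ⊗ y + ε·e ∈ ℝ^{mn} is not a Kronecker product of any two vectors: there do not exist x' ∈ ℝ^m, y' ∈ ℝ^n with z' = x' ⊗ y', provided z' is totally nonzero. -/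
/-- If `x ∈ ℝ^m` and `y ∈ ℝ^n` are totally nonzero, neither a scalar multiple of the
all-ones vector (witnessed by `x_i ≠ x_j`, `y_k ≠ y_ℓ`), and `ε > 0`, then
`z' = x ⊗ y + ε·e`, provided it is totally nonzero, is not a Kronecker product of
any two vectors. -/
theorem kron_plus_eps_not_kron {m n : ℕ}
    (x : Fin m → ℝ) (y : Fin n → ℝ)
    (hx : ∀ a, x a ≠ 0) (hy : ∀ b, y b ≠ 0)
    (i j : Fin m) (k l : Fin n) (hij : i ≠ j) (hkl : k ≠ l)
    (hxij : x i ≠ x j) (hykl : y k ≠ y l)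
    (ε : ℝ) (hε : 0 < ε)
    (hz' : ∀ t : Fin (m * n), vecKron x y t + ε ≠ 0) :
    ¬∃ (x' : Fin m → ℝ) (y' : Fin n → ℝ),
        (fun t => vecKron x y t + ε) = vecKron x' y' := by
  rintro ⟨x', y', h⟩
  have key : ∀ (a : Fin m) (b : Fin n), x a * y b + ε = x' a * y' b := by
    intro a b
    have h1 := congrFun h (finProdFinEquiv (a, b))
    have h2 : finProdFinEquiv.symm (finProdFinEquiv (a, b)) = (a, b) :=
      Equiv.symm_apply_apply _ _
    rw [finProdFinEquiv_symm_apply] at h2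
    have hd : (finProdFinEquiv (a, b)).divNat = a := congrArg Prod.fst h2
    have hmn : (finProdFinEquiv (a, b)).modNat = b := congrArg Prod.snd h2
    simpa [vecKron, hd, hmn] using h1
  have e1 : (x i * y k + ε) * (x j * y l + ε) = (x i * y l + ε) * (x j * y k + ε) := by
    rw [key i k, key j l, key i l, key j k]; ring
  have e2 : ε * ((x i - x j) * (y k - y l)) = 0 := by linear_combination e1
  rcases mul_eq_zero.mp e2 with h0 | h0
  · exact hε.ne' h0
  rcases mul_eq_zero.mp h0 with h1 | h1
  · exact hxij (sub_eq_zero.mp h1)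
  · exact hykl (sub_eq_zero.mp h1)
end

section
/- For n ≥ 1, the n×n discrete Fourier transform matrix F with entries F_{ij} = ω^{(i-1)(j-1)}, ω = exp(2πi/n), is an ideal Perron similarity: its first row is the all-ones vector, and for each k ∈ ⟨n⟩, the matrix F D_{r_k} F^{-1} is entrywise nonnegative, where r_k is the k-th row of F; indeed F D_{r_k} F^{-1} = C^{k-1} where C is the companion matrix of t^n − 1 (a permutation matrix for the n-cycle). -/
open Complex

/-- The `n × n` discrete Fourier transform matrix, `F_{ij} = ω^{(i-1)(j-1)}` with
`ω = exp(2πi/n)`, is an ideal Perron similarity: its first row is the all-ones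
vector, every row `r_k` lies in the spectracone (`F D_{r_k} F⁻¹` is entrywise a
nonnegative real), and indeed `F D_{r_k} F⁻¹ = C^{k-1}`, where `C` is the companion
matrix of `t^n - 1`, i.e. the permutation matrix of the `n`-cycle. -/
theorem dft_isIdealPerronSimilarity (n : ℕ) (hn : 1 ≤ n) :
    letI ω : ℂ := Complex.exp (2 * Real.pi * Complex.I / n)
    letI F : Matrix (Fin n) (Fin n) ℂ := fun i j => ω ^ (i.val * j.val)
    letI C : Matrix (Fin n) (Fin n) ℂ :=
      fun i j => if j.val = (i.val + 1) % n then 1 else 0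
    (∀ j, F ⟨0, hn⟩ j = 1) ∧
      (∀ k : Fin n, ∀ i j, ∃ r : ℝ, 0 ≤ r ∧
        (F * Matrix.diagonal (F k) * F⁻¹) i j = (r : ℂ)) ∧
      ∀ k : Fin n, F * Matrix.diagonal (F k) * F⁻¹ = C ^ k.val := by
  set ω : ℂ := Complex.exp (2 * Real.pi * Complex.I / n) with hωdef
  set F : Matrix (Fin n) (Fin n) ℂ := fun i j => ω ^ (i.val * j.val) with hFdef
  set C : Matrix (Fin n) (Fin n) ℂ :=
    (fun i j => if j.val = (i.val + 1) % n then 1 else 0) with hCdef0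
  have hn0 : n ≠ 0 := by omega
  haveI : NeZero n := ⟨hn0⟩
  have hprim : IsPrimitiveRoot ω n := Complex.isPrimitiveRoot_exp n hn0
  have hω : ω ^ n = 1 := hprim.pow_eq_one
  have hmod : ∀ a : ℕ, ω ^ a = ω ^ (a % n) := by
    intro a
    conv_lhs => rw [← Nat.div_add_mod a n]
    rw [pow_add, pow_mul, hω, one_pow, one_mul]
  -- C in Fin-form
  have hCdef : ∀ i j : Fin n, C i j = if j = i + 1 then 1 else 0 := by
    intro i j
    have h1 : ((i + 1 : Fin n)).val = (i.val + 1) % n := by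
      simp only [Fin.add_def, Fin.val_one']
      exact Nat.add_mod_mod _ _ _
    show (if j.val = (i.val + 1) % n then (1:ℂ) else 0) = _
    rw [← h1]
    simp [Fin.ext_iff]
  open Fin.NatCast in
  have hC : ∀ (k : ℕ) (i j : Fin n),
      (C ^ k) i j = if j = i + (k : Fin n) then 1 else 0 := by
    intro k
    induction k with
    | zero => intro i j; simp [Matrix.one_apply, eq_comm]
    | succ k ih =>
      intro i j
      rw [pow_succ, Matrix.mul_apply]
      have : ∀ m : Fin n, (C ^ k) i m * C m j
          = if m = i + (k : Fin n) then (if j = m + 1 then 1 else 0) else 0 := by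
        intro m
        rw [ih, hCdef]
        split <;> simp
      rw [Finset.sum_congr rfl fun m _ => this m, Finset.sum_ite_eq' _ _
        (fun m => if j = m + 1 then (1:ℂ) else 0)]
      have hcast : ((k + 1 : ℕ) : Fin n) = (k : Fin n) + 1 := by push_cast; ring
      simp [hcast, add_assoc]
  -- invertibility of F
  have hF : F = Matrix.vandermonde (fun i : Fin n => ω ^ i.val) := by
    ext i j
    simp [hFdef, Matrix.vandermonde, pow_mul]
  have hdet : IsUnit F.det := by
    rw [hF, isUnit_iff_ne_zero, ne_eq, ← ne_eq, Matrix.det_vandermonde_ne_zero_iff]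
    intro i j hij
    exact Fin.ext (hprim.pow_inj i.isLt j.isLt hij)
  -- key identity
  open Fin.NatCast in
  have key : ∀ k : Fin n, F * Matrix.diagonal (F k) = C ^ k.val * F := by
    intro k
    ext i j
    rw [Matrix.mul_diagonal, Matrix.mul_apply]
    have : ∀ m : Fin n, (C ^ k.val) i m * F m j
        = if m = i + (k.val : Fin n) then F m j else 0 := by
      intro m; rw [hC]; split <;> simp
    rw [Finset.sum_congr rfl fun m _ => this m, Finset.sum_ite_eq' _ _ (fun m => F m j),
      if_pos (Finset.mem_univ _)]
    have hik : ((i + (k.val : Fin n)).val) = (i.val + k.val) % n := by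
      simp [Fin.add_def]
    show F i j * F k j = F (i + (k.val : Fin n)) j
    simp only [hFdef]
    rw [← pow_add, ← add_mul, hik]
    rw [hmod ((i.val + k.val) % n * j.val), hmod ((i.val + k.val) * j.val)]
    congr 1
    exact ((Nat.mod_modEq _ n).mul_right j.val).symm
  have main : ∀ k : Fin n, F * Matrix.diagonal (F k) * F⁻¹ = C ^ k.val := by
    intro k
    rw [key, Matrix.mul_assoc, Matrix.mul_nonsing_inv F hdet, Matrix.mul_one]
  refine ⟨?_, ?_, main⟩
  · intro j; simp [hFdef]
  · intro k i j
    rw [main k, hC]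
    split
    · exact ⟨1, by norm_num⟩
    · exact ⟨0, by norm_num⟩
end
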